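/- For every strictly ordered bid profile 0 < b_1 < b_2 < ⋯ < b_N, the function a ↦ W(a;b) is strictly decreasing and strictly convex on (0,∞). -/

import Mathlib

/-- Class expected waiting times `W_i` in the accumulating-priority M/G/1 queue
with class loads `ρ`, strictly ordered bid profile `b` and mean residual
service time `W0`, defined by Kleinrock's recursion
`W_i = (W₀/(1−ρ) − Σ_{k<i} ρ_k(1 − b_k/b_i)W_k) / (1 − Σ_{k≥i} ρ_k(1 − b_i/b_k))`. -/
noncomputable def classW {N : ℕ} (ρ b : Fin N → ℝ) (W0 : ℝ) : Fin N → ℝ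
  | i =>
    (W0 / (1 - ∑ k, ρ k)
      - ∑ k : Fin N, if h : k < i then ρ k * (1 - b k / b i) * classW ρ b W0 k else 0)
    / (1 - ∑ k : Fin N, if i ≤ k then ρ k * (1 - b i / b k) else 0)
  termination_by i => i.val
  decreasing_by exact h

/-- Expected waiting time of a tagged customer bidding `a > 0` against the
strictly ordered bid profile `b`:
`W(a;b) = (W₀/(1−ρ) − Σ_{k: b_k<a} ρ_k(1 − b_k/a)W_k) / (1 − Σ_{k: b_k≥a} ρ_k(1 − a/b_k))`. -/
noncomputable def taggedW {N : ℕ} (ρ b : Fin N → ℝ) (W0 : ℝ) (a : ℝ) : ℝ :=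
  (W0 / (1 - ∑ k, ρ k)
    - ∑ k : Fin N, if b k < a then ρ k * (1 - b k / a) * classW ρ b W0 k else 0)
  / (1 - ∑ k : Fin N, if a ≤ b k then ρ k * (1 - a / b k) else 0)

namespace APQ

variable {N : ℕ} (ρ b : Fin N → ℝ) (W0 : ℝ)

/-- generic: sum of ite of difference -/
lemma sum_ite_sub (p : Fin N → Prop) [DecidablePred p] (u v : Fin N → ℝ) :
    (∑ k, if p k then u k - v k else 0)
      = (∑ k, if p k then u k else 0) - (∑ k, if p k then v k else 0) := by
  rw [← Finset.sum_sub_distrib]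
  exact Finset.sum_congr rfl fun k _ => by by_cases h : p k <;> simp [h]

lemma sum_ite_div (p : Fin N → Prop) [DecidablePred p] (u : Fin N → ℝ) (x : ℝ) :
    (∑ k, if p k then u k / x else 0) = (∑ k, if p k then u k else 0) / x := by
  rw [Finset.sum_div]
  exact Finset.sum_congr rfl fun k _ => by by_cases h : p k <;> simp [h]

lemma sum_ite_mul_left (p : Fin N → Prop) [DecidablePred p] (u : Fin N → ℝ) (c : ℝ) :
    (∑ k, if p k then c * u k else 0) = c * (∑ k, if p k then u k else 0) := by
  rw [Finset.mul_sum]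
  exact Finset.sum_congr rfl fun k _ => by by_cases h : p k <;> simp [h]

lemma sum_ite_mul_right (p : Fin N → Prop) [DecidablePred p] (u : Fin N → ℝ) (c : ℝ) :
    (∑ k, if p k then u k * c else 0) = (∑ k, if p k then u k else 0) * c := by
  rw [Finset.sum_mul]
  exact Finset.sum_congr rfl fun k _ => by by_cases h : p k <;> simp [h]

lemma sum_lt_succ {i : ℕ} (h : i < N) (u : Fin N → ℝ) :
    (∑ k, if k.val < i + 1 then u k else 0)
      = (∑ k, if k.val < i then u k else 0) + u ⟨i, h⟩ := by
  have : ∀ k : Fin N, (if k.val < i + 1 then u k else 0)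
      = (if k.val < i then u k else 0) + (if k = ⟨i, h⟩ then u k else 0) := by
    intro k
    rcases lt_trichotomy k.val i with hk | hk | hk
    · rw [if_pos (by omega), if_pos hk, if_neg (by intro he; subst he; simp at hk), add_zero]
    · rw [if_pos (by omega), if_neg (by omega), if_pos (by exact Fin.ext hk), zero_add]
    · rw [if_neg (by omega), if_neg (by omega),
        if_neg (by intro he; subst he; simp at hk), add_zero]
  rw [Finset.sum_congr rfl fun k _ => this k, Finset.sum_add_distrib,
    Finset.sum_ite_eq' Finset.univ ⟨i, h⟩ u, if_pos (Finset.mem_univ _)]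

lemma sum_ge_succ {i : ℕ} (h : i < N) (u : Fin N → ℝ) :
    (∑ k, if i ≤ k.val then u k else 0)
      = (∑ k, if i + 1 ≤ k.val then u k else 0) + u ⟨i, h⟩ := by
  have : ∀ k : Fin N, (if i ≤ k.val then u k else 0)
      = (if i + 1 ≤ k.val then u k else 0) + (if k = ⟨i, h⟩ then u k else 0) := by
    intro k
    rcases lt_trichotomy k.val i with hk | hk | hk
    · rw [if_neg (by omega), if_neg (by omega),
        if_neg (by intro he; subst he; simp at hk), add_zero]
    · rw [if_pos (by omega), if_neg (by omega), if_pos (by exact Fin.ext hk), zero_add]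
    · rw [if_pos (by omega), if_pos (by omega),
        if_neg (by intro he; subst he; simp at hk), add_zero]
  rw [Finset.sum_congr rfl fun k _ => this k, Finset.sum_add_distrib,
    Finset.sum_ite_eq' Finset.univ ⟨i, h⟩ u, if_pos (Finset.mem_univ _)]

end APQ
namespace APQ
variable {N : ℕ} (ρ b : Fin N → ℝ) (W0 : ℝ)

noncomputable def CC : ℝ := W0 / (1 - ∑ k, ρ k)
noncomputable def TT (m : ℕ) : ℝ := ∑ k, if k.val < m then ρ k * classW ρ b W0 k else 0
noncomputable def PP (m : ℕ) : ℝ := CC ρ W0 - TT ρ b W0 m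
noncomputable def QQ (m : ℕ) : ℝ := ∑ k, if k.val < m then ρ k * b k * classW ρ b W0 k else 0
noncomputable def RR (m : ℕ) : ℝ := 1 - ∑ k, if m ≤ k.val then ρ k else 0
noncomputable def SS (m : ℕ) : ℝ := ∑ k, if m ≤ k.val then ρ k / b k else 0
noncomputable def FF (m : ℕ) (a : ℝ) : ℝ :=
  (PP ρ b W0 m + QQ ρ b W0 m / a) / (RR ρ m + SS ρ b m * a)
noncomputable def gg (m : ℕ) (a : ℝ) : ℝ :=
  ((-(QQ ρ b W0 m) / a ^ 2) * (RR ρ m + SS ρ b m * a)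
    - (PP ρ b W0 m + QQ ρ b W0 m / a) * SS ρ b m) / (RR ρ m + SS ρ b m * a) ^ 2

section Pos
variable (hρ : ∀ k, 0 < ρ k) (hρsum : ∑ k, ρ k < 1) (hbpos : ∀ k, 0 < b k) (hW0 : 0 < W0)
variable (hbmono : StrictMono b)
include hρ hρsum in
lemma RR_pos (m : ℕ) : 0 < RR ρ m := by
  unfold RR
  have h : (∑ k, if m ≤ k.val then ρ k else 0) ≤ ∑ k, ρ k := by
    apply Finset.sum_le_sum
    intro k _
    by_cases h : m ≤ k.val
    · simp [h]
    · simp only [h, if_false]; exact (hρ k).le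
  linarith

include hρ hbpos in
lemma SS_nonneg (m : ℕ) : 0 ≤ SS ρ b m := by
  apply Finset.sum_nonneg
  intro k _
  by_cases h : m ≤ k.val
  · simp only [h, if_true]
    exact div_nonneg (hρ k).le (hbpos k).le
  · simp [h]

include hρ hρsum hbpos in
lemma den_pos (m : ℕ) {a : ℝ} (ha : 0 < a) : 0 < RR ρ m + SS ρ b m * a :=
  add_pos_of_pos_of_nonneg (RR_pos ρ hρ hρsum m)
    (mul_nonneg (SS_nonneg ρ b hρ hbpos m) ha.le)

include hρ hρsum hbpos in
/-- The recursion, in piecewise-rational form. -/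
lemma classW_eq (c : Fin N) :
    classW ρ b W0 c * (RR ρ c.val + SS ρ b c.val * b c)
      = PP ρ b W0 c.val + QQ ρ b W0 c.val / b c := by
  have hden : (1 - ∑ k : Fin N, if c ≤ k then ρ k * (1 - b c / b k) else 0)
      = RR ρ c.val + SS ρ b c.val * b c := by
    unfold RR SS
    have h1 : ∀ k : Fin N, (if c ≤ k then ρ k * (1 - b c / b k) else 0)
        = (if c.val ≤ k.val then ρ k - (ρ k / b k) * b c else 0) := by
      intro k
      by_cases h : c ≤ k
      · rw [if_pos h, if_pos (Fin.le_def.mp h)]; ring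
      · rw [if_neg h, if_neg fun hh => h (Fin.le_def.mpr hh)]
    rw [Finset.sum_congr rfl fun k _ => h1 k, sum_ite_sub, sum_ite_mul_right]
    ring
  have hnum : (W0 / (1 - ∑ k, ρ k)
      - ∑ k : Fin N, if k < c then ρ k * (1 - b k / b c) * classW ρ b W0 k else 0)
      = PP ρ b W0 c.val + QQ ρ b W0 c.val / b c := by
    unfold PP TT QQ CC
    have h1 : ∀ k : Fin N, (if k < c then ρ k * (1 - b k / b c) * classW ρ b W0 k else 0)
        = (if k.val < c.val then
            ρ k * classW ρ b W0 k - (ρ k * b k * classW ρ b W0 k) / b c else 0) := by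
      intro k
      by_cases h : k < c
      · rw [if_pos h, if_pos (Fin.lt_def.mp h)]; ring
      · rw [if_neg h, if_neg fun hh => h (Fin.lt_def.mpr hh)]
    rw [Finset.sum_congr rfl fun k _ => h1 k, sum_ite_sub, sum_ite_div]
    ring
  have hd0 : (RR ρ c.val + SS ρ b c.val * b c) ≠ 0 :=
    (den_pos ρ b hρ hρsum hbpos c.val (hbpos c)).ne'
  rw [classW]
  simp only [dite_eq_ite]
  rw [hnum, hden, div_mul_cancel₀ _ hd0]


noncomputable def SL (m : ℕ) : ℝ := ∑ k, if k.val < m then ρ k else 0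
noncomputable def SG (m : ℕ) : ℝ := ∑ k, if m ≤ k.val then ρ k else 0
noncomputable def sterm (i : Fin N) (m : ℕ) : ℝ :=
  ∑ k, if m ≤ k.val then ρ k * (1 - b i / b k) else 0
noncomputable def Phi (m : ℕ) : ℝ :=
  ∑ i, if i.val < m then ρ i * classW ρ b W0 i * sterm ρ b i m else 0

include hρ in
lemma SG_le (m : ℕ) : SG ρ m ≤ ∑ k, ρ k := by
  apply Finset.sum_le_sum
  intro k _
  by_cases h : m ≤ k.val
  · simp [h]
  · simp only [h, if_false]; exact (hρ k).le

lemma SL_nonneg (hρ' : ∀ k, 0 < ρ k) (m : ℕ) : 0 ≤ SL ρ m := by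
  apply Finset.sum_nonneg
  intro k _
  by_cases h : k.val < m
  · simp only [h, if_true]; exact (hρ' k).le
  · simp [h]

lemma SL_add_SG (m : ℕ) : SL ρ m + SG ρ m = ∑ k, ρ k := by
  unfold SL SG
  rw [← Finset.sum_add_distrib]
  apply Finset.sum_congr rfl
  intro k _
  by_cases h : k.val < m
  · rw [if_pos h, if_neg (by omega), add_zero]
  · rw [if_neg h, if_pos (by omega), zero_add]

include hρ hbpos in
lemma sterm_le (i : Fin N) (m : ℕ) : sterm ρ b i m ≤ SG ρ m := by
  apply Finset.sum_le_sum
  intro k _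
  by_cases h : m ≤ k.val
  · simp only [h, if_true]
    have h1 : 0 ≤ b i / b k := div_nonneg (hbpos i).le (hbpos k).le
    nlinarith [hρ k]
  · simp [h]

include hρ hρsum hbpos in
lemma sterm_lt_one (i : Fin N) (m : ℕ) : sterm ρ b i m < 1 := by
  have h1 := sterm_le ρ b hρ hbpos i m
  have h2 := SG_le ρ hρ m
  linarith

include hρ hρsum hbpos in
/-- The recursion in raw form. -/
lemma classW_raw (c : Fin N) :
    classW ρ b W0 c * (1 - sterm ρ b c c.val)
      = CC ρ W0 - ∑ k, if k.val < c.val then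
          ρ k * (1 - b k / b c) * classW ρ b W0 k else 0 := by
  have hden : (1 - ∑ k : Fin N, if c ≤ k then ρ k * (1 - b c / b k) else 0)
      = 1 - sterm ρ b c c.val := by
    have h0 : (∑ k : Fin N, if c ≤ k then ρ k * (1 - b c / b k) else 0)
        = sterm ρ b c c.val := by
      unfold sterm
      apply Finset.sum_congr rfl
      intro k _
      by_cases h : c ≤ k
      · rw [if_pos h, if_pos (Fin.le_def.mp h)]
      · rw [if_neg h, if_neg fun hh => h (Fin.le_def.mpr hh)]
    rw [h0]
  have hnum : (∑ k : Fin N, if k < c then ρ k * (1 - b k / b c) * classW ρ b W0 k else 0)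
      = ∑ k, if k.val < c.val then ρ k * (1 - b k / b c) * classW ρ b W0 k else 0 := by
    apply Finset.sum_congr rfl
    intro k _
    by_cases h : k < c
    · rw [if_pos h, if_pos (Fin.lt_def.mp h)]
    · rw [if_neg h, if_neg fun hh => h (Fin.lt_def.mpr hh)]
  have hd0 : (1 - sterm ρ b c c.val) ≠ 0 :=
    (by linarith [sterm_lt_one ρ b hρ hρsum hbpos c c.val] : (0:ℝ) < 1 - sterm ρ b c c.val).ne'
  rw [classW]
  simp only [dite_eq_ite]
  rw [hnum, hden, div_mul_cancel₀ _ hd0]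
  unfold CC
  rfl

include hρ hρsum hbpos in
/-- Partial conservation identity. -/
lemma ident : ∀ m, m ≤ N → TT ρ b W0 m = CC ρ W0 * SL ρ m + Phi ρ b W0 m := by
  intro m
  induction m with
  | zero => simp [TT, SL, Phi]
  | succ m ih =>
    intro hm1
    have hmN : m < N := hm1
    have ihm := ih (le_of_lt hmN)
    set c : Fin N := ⟨m, hmN⟩ with hc
    have hTT : TT ρ b W0 (m+1) = TT ρ b W0 m + ρ c * classW ρ b W0 c :=
      sum_lt_succ hmN _
    have hSL : SL ρ (m+1) = SL ρ m + ρ c := sum_lt_succ hmN _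
    have hsterm : ∀ i : Fin N, sterm ρ b i m = sterm ρ b i (m+1) + ρ c * (1 - b i / b c) :=
      fun i => sum_ge_succ hmN _
    have hstermc : sterm ρ b c (m+1) = sterm ρ b c m := by
      rw [hsterm c, div_self (hbpos c).ne']
      ring
    have hPhi : Phi ρ b W0 (m+1) = Phi ρ b W0 m
        - ρ c * (∑ k, if k.val < m then ρ k * (1 - b k / b c) * classW ρ b W0 k else 0)
        + ρ c * classW ρ b W0 c * sterm ρ b c m := by
      unfold Phi
      rw [sum_lt_succ hmN (fun i => ρ i * classW ρ b W0 i * sterm ρ b i (m+1)), hstermc]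
      have h1 : ∀ i : Fin N, (if i.val < m then ρ i * classW ρ b W0 i * sterm ρ b i (m+1) else 0)
          = (if i.val < m then ρ i * classW ρ b W0 i * sterm ρ b i m else 0)
            - (if i.val < m then ρ c * (ρ i * (1 - b i / b c) * classW ρ b W0 i) else 0) := by
        intro i
        by_cases h : i.val < m
        · rw [if_pos h, if_pos h, if_pos h, hsterm i]; ring
        · simp [h]
      rw [Finset.sum_congr rfl fun i _ => h1 i, Finset.sum_sub_distrib,
        sum_ite_mul_left]
    have hraw := classW_raw ρ b W0 hρ hρsum hbpos c
    rw [hTT, hSL, hPhi]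
    have hcv : (c : Fin N).val = m := rfl
    rw [hcv] at hraw
    linear_combination ihm + ρ c * hraw

include hρ hρsum hbpos hW0 in
lemma TT_lt (m : ℕ) (hm : m ≤ N)
    (hWpos : ∀ k : Fin N, k.val < m → 0 < classW ρ b W0 k) :
    TT ρ b W0 m < CC ρ W0 := by
  have hid := ident ρ b W0 hρ hρsum hbpos m hm
  have hCC : 0 < CC ρ W0 := div_pos hW0 (by linarith)
  have hPhiLe : Phi ρ b W0 m ≤ TT ρ b W0 m * SG ρ m := by
    unfold Phi TT
    rw [← sum_ite_mul_right]
    apply Finset.sum_le_sum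
    intro i _
    by_cases h : i.val < m
    · simp only [h, if_true]
      exact mul_le_mul_of_nonneg_left (sterm_le ρ b hρ hbpos i m)
        (mul_nonneg (hρ i).le (hWpos i h).le)
    · simp [h]
  have hSG1 : SG ρ m < 1 := by
    have := SG_le ρ hρ m; linarith
  have hSLSG := SL_add_SG ρ m
  have hTTSG : TT ρ b W0 m * (1 - SG ρ m) ≤ CC ρ W0 * SL ρ m := by linarith
  have hkey : CC ρ W0 * SL ρ m < CC ρ W0 * (1 - SG ρ m) := by
    apply mul_lt_mul_of_pos_left _ hCC
    linarith
  nlinarith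

include hρ hρsum hbpos hW0 in
lemma Wpos : ∀ c : Fin N, 0 < classW ρ b W0 c := by
  have main : ∀ m, m ≤ N → ∀ k : Fin N, k.val < m → 0 < classW ρ b W0 k := by
    intro m
    induction m with
    | zero => intro _ k hk; omega
    | succ m ih =>
      intro hm1 k hk
      have hmN : m < N := hm1
      rcases Nat.lt_or_ge k.val m with h | h
      · exact ih (le_of_lt hmN) k h
      · have hkm : k.val = m := by omega
        have hWm := fun j hj => ih (le_of_lt hmN) j hj
        have hTTlt := TT_lt ρ b W0 hρ hρsum hbpos hW0 m (le_of_lt hmN) hWm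
        have hraw := classW_raw ρ b W0 hρ hρsum hbpos k
        rw [hkm] at hraw
        have hNum : (∑ j, if j.val < m then ρ j * (1 - b j / b k) * classW ρ b W0 j else 0)
            ≤ TT ρ b W0 m := by
          apply Finset.sum_le_sum
          intro j _
          by_cases h2 : j.val < m
          · simp only [h2, if_true]
            have h3 : 0 ≤ b j / b k := div_nonneg (hbpos j).le (hbpos k).le
            nlinarith [hWm j h2, hρ j,
              mul_nonneg (mul_nonneg (hρ j).le h3) (hWm j h2).le]
          · simp [h2]
        have hden : 0 < 1 - sterm ρ b k m := by
          have h4 := sterm_le ρ b hρ hbpos k m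
          have h5 := SG_le ρ hρ m
          linarith
        have hpos : 0 < classW ρ b W0 k * (1 - sterm ρ b k m) := by
          rw [hraw]; linarith
        rcases mul_pos_iff.mp hpos with ⟨h6, _⟩ | ⟨_, h7⟩
        · exact h6
        · linarith
  exact fun c => main N le_rfl c c.isLt

include hρ hρsum hbpos hW0 in
lemma PP_pos (m : ℕ) (hm : m ≤ N) : 0 < PP ρ b W0 m := by
  have := TT_lt ρ b W0 hρ hρsum hbpos hW0 m hm
    (fun k _ => Wpos ρ b W0 hρ hρsum hbpos hW0 k)
  unfold PP
  linarith

lemma QQ_zero : QQ ρ b W0 0 = 0 := by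
  unfold QQ; simp

include hρ hρsum hbpos hW0 in
lemma QQ_nonneg (m : ℕ) : 0 ≤ QQ ρ b W0 m := by
  apply Finset.sum_nonneg
  intro k _
  by_cases h : k.val < m
  · simp only [h, if_true]
    exact mul_nonneg (mul_nonneg (hρ k).le (hbpos k).le)
      (Wpos ρ b W0 hρ hρsum hbpos hW0 k).le
  · simp [h]

include hρ hρsum hbpos hW0 in
lemma QQ_pos (m : ℕ) (hm : 1 ≤ m) (hN : 0 < N) : 0 < QQ ρ b W0 m := by
  apply Finset.sum_pos'
  · intro k _
    by_cases h : k.val < m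
    · simp only [h, if_true]
      exact mul_nonneg (mul_nonneg (hρ k).le (hbpos k).le)
        (Wpos ρ b W0 hρ hρsum hbpos hW0 k).le
    · simp [h]
  · refine ⟨⟨0, hN⟩, Finset.mem_univ _, ?_⟩
    have h : (⟨0, hN⟩ : Fin N).val < m := hm
    simp only [h, if_true]
    exact mul_pos (mul_pos (hρ ⟨0, hN⟩) (hbpos ⟨0, hN⟩))
      (Wpos ρ b W0 hρ hρsum hbpos hW0 ⟨0, hN⟩)

include hρ hbpos in
lemma SS_pos (m : ℕ) (hm : m < N) : 0 < SS ρ b m := by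
  apply Finset.sum_pos'
  · intro k _
    by_cases h : m ≤ k.val
    · simp only [h, if_true]; exact div_nonneg (hρ k).le (hbpos k).le
    · simp [h]
  · refine ⟨⟨m, hm⟩, Finset.mem_univ _, ?_⟩
    have h : m ≤ (⟨m, hm⟩ : Fin N).val := le_refl m
    simp only [h, if_true]
    exact div_pos (hρ ⟨m, hm⟩) (hbpos ⟨m, hm⟩)

lemma gg_eq (m : ℕ) {a : ℝ} (ha : a ≠ 0) :
    gg ρ b W0 m a = -((QQ ρ b W0 m * RR ρ m / a ^ 2 + 2 * (QQ ρ b W0 m * SS ρ b m) / a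
      + PP ρ b W0 m * SS ρ b m) / (RR ρ m + SS ρ b m * a) ^ 2) := by
  unfold gg
  rw [neg_div]
  congr 1
  field_simp
  ring

include hρ hρsum hbpos hW0 in
lemma AA_pos (m : ℕ) (hm : m ≤ N) (hN : 0 < N) {a : ℝ} (ha : 0 < a) :
    0 < QQ ρ b W0 m * RR ρ m / a ^ 2 + 2 * (QQ ρ b W0 m * SS ρ b m) / a
      + PP ρ b W0 m * SS ρ b m := by
  have hP := PP_pos ρ b W0 hρ hρsum hbpos hW0 m hm
  have hR := RR_pos ρ hρ hρsum m
  have hS := SS_nonneg ρ b hρ hbpos m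
  have hQ := QQ_nonneg ρ b W0 hρ hρsum hbpos hW0 m
  rcases Nat.eq_zero_or_pos m with rfl | hm1
  · have hS0 := SS_pos ρ b hρ hbpos 0 hN
    rw [QQ_zero]
    simp only [zero_mul, mul_zero, zero_div, zero_add, add_zero]
    exact mul_pos hP hS0
  · have hQ0 := QQ_pos ρ b W0 hρ hρsum hbpos hW0 m hm1 hN
    have h1 : 0 < QQ ρ b W0 m * RR ρ m / a ^ 2 :=
      div_pos (mul_pos hQ0 hR) (pow_pos ha 2)
    have h2 : 0 ≤ 2 * (QQ ρ b W0 m * SS ρ b m) / a :=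
      div_nonneg (mul_nonneg (by norm_num) (mul_nonneg hQ hS)) ha.le
    have h3 : 0 ≤ PP ρ b W0 m * SS ρ b m := mul_nonneg hP.le hS
    linarith

include hρ hρsum hbpos hW0 in
lemma gg_neg (m : ℕ) (hm : m ≤ N) (hN : 0 < N) {a : ℝ} (ha : 0 < a) :
    gg ρ b W0 m a < 0 := by
  rw [gg_eq ρ b W0 m ha.ne']
  have hA := AA_pos ρ b W0 hρ hρsum hbpos hW0 m hm hN ha
  have hD := den_pos ρ b hρ hρsum hbpos m ha
  have : 0 < (RR ρ m + SS ρ b m * a) ^ 2 := by positivity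
  exact neg_neg_of_pos (div_pos hA this)

include hρ hρsum hbpos hW0 in
lemma gg_mono_le (m : ℕ) (hm : m ≤ N) (hN : 0 < N) {x y : ℝ}
    (hx : 0 < x) (hxy : x ≤ y) : gg ρ b W0 m x ≤ gg ρ b W0 m y := by
  have hy : 0 < y := lt_of_lt_of_le hx hxy
  rw [gg_eq ρ b W0 m hx.ne', gg_eq ρ b W0 m hy.ne', neg_le_neg_iff]
  have hP := PP_pos ρ b W0 hρ hρsum hbpos hW0 m hm
  have hR := RR_pos ρ hρ hρsum m
  have hS := SS_nonneg ρ b hρ hbpos m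
  have hQ := QQ_nonneg ρ b W0 hρ hρsum hbpos hW0 m
  have hDx := den_pos ρ b hρ hρsum hbpos m hx
  have hDy := den_pos ρ b hρ hρsum hbpos m hy
  apply div_le_div₀ (le_of_lt (AA_pos ρ b W0 hρ hρsum hbpos hW0 m hm hN hx))
  · have h1 : QQ ρ b W0 m * RR ρ m / y ^ 2 ≤ QQ ρ b W0 m * RR ρ m / x ^ 2 := by
      apply div_le_div_of_nonneg_left (by positivity) (by positivity)
      nlinarith
    have h2 : 2 * (QQ ρ b W0 m * SS ρ b m) / y ≤ 2 * (QQ ρ b W0 m * SS ρ b m) / x :=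
      div_le_div_of_nonneg_left (by positivity) hx hxy
    linarith
  · positivity
  · have h5 : RR ρ m + SS ρ b m * x ≤ RR ρ m + SS ρ b m * y := by nlinarith
    exact pow_le_pow_left₀ hDx.le h5 2

include hρ hρsum hbpos hW0 in
lemma gg_mono_lt (m : ℕ) (hm : m ≤ N) (hN : 0 < N) {x y : ℝ}
    (hx : 0 < x) (hxy : x < y) : gg ρ b W0 m x < gg ρ b W0 m y := by
  have hy : 0 < y := lt_trans hx hxy
  rw [gg_eq ρ b W0 m hx.ne', gg_eq ρ b W0 m hy.ne', neg_lt_neg_iff]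
  have hP := PP_pos ρ b W0 hρ hρsum hbpos hW0 m hm
  have hR := RR_pos ρ hρ hρsum m
  have hS := SS_nonneg ρ b hρ hbpos m
  have hQ := QQ_nonneg ρ b W0 hρ hρsum hbpos hW0 m
  have hDx := den_pos ρ b hρ hρsum hbpos m hx
  have hDy := den_pos ρ b hρ hρsum hbpos m hy
  rcases Nat.eq_zero_or_pos m with rfl | hm1
  · have hS0 := SS_pos ρ b hρ hbpos 0 hN
    rw [QQ_zero]
    simp only [zero_mul, mul_zero, zero_div, zero_add, add_zero]
    apply div_lt_div_of_pos_left (mul_pos hP hS0) (by positivity)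
    have h5 : RR ρ 0 + SS ρ b 0 * x < RR ρ 0 + SS ρ b 0 * y := by nlinarith
    exact pow_lt_pow_left₀ h5 hDx.le two_ne_zero
  · have hQ0 := QQ_pos ρ b W0 hρ hρsum hbpos hW0 m hm1 hN
    apply div_lt_div₀
    · have h1 : QQ ρ b W0 m * RR ρ m / y ^ 2 < QQ ρ b W0 m * RR ρ m / x ^ 2 := by
        apply div_lt_div_of_pos_left (by positivity) (by positivity)
        nlinarith
      have h2 : 2 * (QQ ρ b W0 m * SS ρ b m) / y ≤ 2 * (QQ ρ b W0 m * SS ρ b m) / x :=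
        div_le_div_of_nonneg_left (by positivity) hx hxy.le
      linarith
    · have h5 : RR ρ m + SS ρ b m * x ≤ RR ρ m + SS ρ b m * y := by nlinarith
      exact pow_le_pow_left₀ hDx.le h5 2
    · exact le_of_lt (AA_pos ρ b W0 hρ hρsum hbpos hW0 m hm hN hx)
    · positivity

lemma PP_succ {m : ℕ} (h : m < N) :
    PP ρ b W0 (m+1) = PP ρ b W0 m - ρ ⟨m, h⟩ * classW ρ b W0 ⟨m, h⟩ := by
  unfold PP TT
  rw [sum_lt_succ h]
  ring

lemma QQ_succ {m : ℕ} (h : m < N) :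
    QQ ρ b W0 (m+1) = QQ ρ b W0 m + ρ ⟨m, h⟩ * b ⟨m, h⟩ * classW ρ b W0 ⟨m, h⟩ := by
  unfold QQ
  rw [sum_lt_succ h]

lemma RR_succ {m : ℕ} (h : m < N) : RR ρ (m+1) = RR ρ m + ρ ⟨m, h⟩ := by
  unfold RR
  rw [sum_ge_succ h]
  ring

lemma SS_succ {m : ℕ} (h : m < N) : SS ρ b (m+1) = SS ρ b m - ρ ⟨m, h⟩ / b ⟨m, h⟩ := by
  unfold SS
  rw [sum_ge_succ h]
  ring

include hbpos in
lemma bridge_val (c : Fin N) : FF ρ b W0 (c.val + 1) (b c) = FF ρ b W0 c.val (b c) := by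
  have ht : b c ≠ 0 := (hbpos c).ne'
  have hc : (⟨c.val, c.isLt⟩ : Fin N) = c := rfl
  unfold FF
  rw [PP_succ ρ b W0 c.isLt, QQ_succ ρ b W0 c.isLt, RR_succ ρ c.isLt, SS_succ ρ b c.isLt, hc]
  have hnum : PP ρ b W0 c.val - ρ c * classW ρ b W0 c
      + (QQ ρ b W0 c.val + ρ c * b c * classW ρ b W0 c) / b c
      = PP ρ b W0 c.val + QQ ρ b W0 c.val / b c := by
    field_simp
    all_goals ring
  have hden : RR ρ c.val + ρ c + (SS ρ b c.val - ρ c / b c) * b c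
      = RR ρ c.val + SS ρ b c.val * b c := by
    field_simp
    all_goals ring
  rw [hnum, hden]

include hρ hρsum hbpos in
lemma bridge_deriv (c : Fin N) :
    gg ρ b W0 (c.val + 1) (b c) = gg ρ b W0 c.val (b c) := by
  have ht : (0:ℝ) < b c := hbpos c
  have hc : (⟨c.val, c.isLt⟩ : Fin N) = c := rfl
  have hW := classW_eq ρ b W0 hρ hρsum hbpos c
  have hden2 : RR ρ (c.val+1) + SS ρ b (c.val+1) * b c = RR ρ c.val + SS ρ b c.val * b c := by
    rw [RR_succ ρ c.isLt, SS_succ ρ b c.isLt, hc]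
    field_simp
    ring
  have hA : QQ ρ b W0 (c.val+1) * RR ρ (c.val+1) / b c ^ 2
        + 2 * (QQ ρ b W0 (c.val+1) * SS ρ b (c.val+1)) / b c
        + PP ρ b W0 (c.val+1) * SS ρ b (c.val+1)
      = QQ ρ b W0 c.val * RR ρ c.val / b c ^ 2
        + 2 * (QQ ρ b W0 c.val * SS ρ b c.val) / b c
        + PP ρ b W0 c.val * SS ρ b c.val := by
    rw [PP_succ ρ b W0 c.isLt, QQ_succ ρ b W0 c.isLt, RR_succ ρ c.isLt, SS_succ ρ b c.isLt, hc]
    field_simp at hW ⊢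
    linear_combination ρ c * hW
  rw [gg_eq ρ b W0 _ ht.ne', gg_eq ρ b W0 _ ht.ne', hden2, hA]

lemma FF_hasDeriv (m : ℕ) {a : ℝ} (ha : a ≠ 0)
    (hden : RR ρ m + SS ρ b m * a ≠ 0) : HasDerivAt (FF ρ b W0 m) (gg ρ b W0 m a) a := by
  have h1 : HasDerivAt (fun x : ℝ => PP ρ b W0 m + QQ ρ b W0 m / x) (-(QQ ρ b W0 m) / a ^ 2) a := by
    have h0 : HasDerivAt (fun x : ℝ => PP ρ b W0 m + QQ ρ b W0 m * x⁻¹)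
        (QQ ρ b W0 m * (-(a ^ 2)⁻¹)) a := ((hasDerivAt_inv ha).const_mul (QQ ρ b W0 m)).const_add _
    have he : (fun x : ℝ => PP ρ b W0 m + QQ ρ b W0 m / x)
        = fun x : ℝ => PP ρ b W0 m + QQ ρ b W0 m * x⁻¹ := by
      funext x; rw [div_eq_mul_inv]
    rw [he]
    convert h0 using 1
    field_simp
  have h2 : HasDerivAt (fun x : ℝ => RR ρ m + SS ρ b m * x) (SS ρ b m) a := by
    have h0 : HasDerivAt (fun x : ℝ => RR ρ m + SS ρ b m * x) (SS ρ b m * 1) a :=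
      ((hasDerivAt_id a).const_mul (SS ρ b m)).const_add _
    simpa using h0
  have h3 := h1.div h2 hden
  exact h3

noncomputable def cnt (a : ℝ) : ℕ := (Finset.univ.filter fun k : Fin N => b k < a).card

lemma cnt_le (a : ℝ) : cnt b a ≤ N :=
  le_trans (Finset.card_filter_le _ _) (by simp)

include hbmono in
lemma cnt_lt_iff (a : ℝ) (k : Fin N) : b k < a ↔ k.val < cnt b a := by
  unfold cnt
  constructor
  · intro h
    have hsub : Finset.Iic k ⊆ Finset.univ.filter fun j : Fin N => b j < a := by
      intro j hj
      rw [Finset.mem_Iic] at hj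
      rw [Finset.mem_filter]
      exact ⟨Finset.mem_univ _, lt_of_le_of_lt (hbmono.monotone hj) h⟩
    have := Finset.card_le_card hsub
    rw [Fin.card_Iic] at this
    omega
  · intro h
    by_contra hba
    push_neg at hba
    have hsub : (Finset.univ.filter fun j : Fin N => b j < a) ⊆ Finset.Iio k := by
      intro j hj
      rw [Finset.mem_filter] at hj
      rw [Finset.mem_Iio]
      exact hbmono.lt_iff_lt.mp (lt_of_lt_of_le hj.2 hba)
    have := Finset.card_le_card hsub
    rw [Fin.card_Iio] at this
    omega

include hbmono in
lemma cnt_eq (a : ℝ) (i : ℕ) (hi : i ≤ N) (h : ∀ k : Fin N, b k < a ↔ k.val < i) :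
    cnt b a = i := by
  rcases lt_trichotomy (cnt b a) i with hlt | heq | hgt
  · exfalso
    have hk : (⟨cnt b a, lt_of_lt_of_le hlt hi⟩ : Fin N).val < i := hlt
    have := (h _).mpr hk
    rw [cnt_lt_iff b hbmono] at this
    exact lt_irrefl _ this
  · exact heq
  · exfalso
    have hcle := cnt_le b a
    have hk : (⟨i, lt_of_lt_of_le hgt hcle⟩ : Fin N).val < cnt b a := hgt
    rw [← cnt_lt_iff b hbmono] at hk
    exact lt_irrefl i ((h _).mp hk)

lemma cnt_mono {x y : ℝ} (hxy : x ≤ y) : cnt b x ≤ cnt b y :=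
  Finset.card_le_card (Finset.monotone_filter_right _ fun k _ hk => lt_of_lt_of_le hk hxy)

include hbmono in
lemma cnt_bc (c : Fin N) : cnt b (b c) = c.val :=
  cnt_eq b hbmono (b c) c.val c.isLt.le fun k => by
    rw [hbmono.lt_iff_lt, Fin.lt_def]

include hbmono in
lemma tagged_eq (x : ℝ) : taggedW ρ b W0 x = FF ρ b W0 (cnt b x) x := by
  have hnum : (W0 / (1 - ∑ k, ρ k)
      - ∑ k : Fin N, if b k < x then ρ k * (1 - b k / x) * classW ρ b W0 k else 0)
      = PP ρ b W0 (cnt b x) + QQ ρ b W0 (cnt b x) / x := by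
    unfold PP TT QQ CC
    have h1 : ∀ k : Fin N, (if b k < x then ρ k * (1 - b k / x) * classW ρ b W0 k else 0)
        = (if k.val < cnt b x then
            ρ k * classW ρ b W0 k - (ρ k * b k * classW ρ b W0 k) / x else 0) := by
      intro k
      by_cases h : b k < x
      · rw [if_pos h, if_pos ((cnt_lt_iff b hbmono x k).mp h)]; ring
      · rw [if_neg h, if_neg fun hh => h ((cnt_lt_iff b hbmono x k).mpr hh)]
    rw [Finset.sum_congr rfl fun k _ => h1 k, sum_ite_sub, sum_ite_div]
    ring
  have hden : (1 - ∑ k : Fin N, if x ≤ b k then ρ k * (1 - x / b k) else 0)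
      = RR ρ (cnt b x) + SS ρ b (cnt b x) * x := by
    unfold RR SS
    have h1 : ∀ k : Fin N, (if x ≤ b k then ρ k * (1 - x / b k) else 0)
        = (if cnt b x ≤ k.val then ρ k - (ρ k / b k) * x else 0) := by
      intro k
      by_cases h : x ≤ b k
      · have hnl : ¬ k.val < cnt b x :=
          fun hh => (not_lt.mpr h) ((cnt_lt_iff b hbmono x k).mpr hh)
        rw [if_pos h, if_pos (not_lt.mp hnl)]
        ring
      · rw [if_neg h, if_neg
          (not_le.mpr ((cnt_lt_iff b hbmono x k).mp (not_le.mp h)))]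
    rw [Finset.sum_congr rfl fun k _ => h1 k, sum_ite_sub, sum_ite_mul_right]
    ring
  unfold taggedW FF
  rw [hnum, hden]

include hρ hρsum hbpos hbmono in
lemma tagged_hasDeriv (hN : 0 < N) {a : ℝ} (ha : 0 < a) :
    HasDerivAt (taggedW ρ b W0) (gg ρ b W0 (cnt b a) a) a := by
  have hcle : cnt b a ≤ N := cnt_le b a
  have h1 : ∀ᶠ x in nhds a, 0 < x := eventually_gt_nhds ha
  by_cases hex : ∃ c : Fin N, b c = a
  · obtain ⟨c, hc⟩ := hex
    have hia : cnt b a = c.val := by rw [← hc]; exact cnt_bc b hbmono c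
    have hdL : HasDerivAt (FF ρ b W0 c.val) (gg ρ b W0 c.val a) a :=
      FF_hasDeriv ρ b W0 c.val ha.ne' (den_pos ρ b hρ hρsum hbpos c.val ha).ne'
    have hdR : HasDerivAt (FF ρ b W0 (c.val + 1)) (gg ρ b W0 (c.val + 1) a) a :=
      FF_hasDeriv ρ b W0 (c.val + 1) ha.ne' (den_pos ρ b hρ hρsum hbpos (c.val + 1) ha).ne'
    have h2 : ∀ᶠ x in nhds a, ∀ k : Fin N, k.val < c.val → b k < x := by
      rw [Filter.eventually_all]
      intro k
      by_cases hk : k.val < c.val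
      · have hbk : b k < a := by rw [← hc]; exact hbmono (Fin.lt_def.mpr hk)
        exact (eventually_gt_nhds hbk).mono fun x hx _ => hx
      · exact Filter.Eventually.of_forall fun x hk2 => absurd hk2 hk
    have h3 : ∀ᶠ x in nhds a, ∀ k : Fin N, c.val + 1 ≤ k.val → x < b k := by
      rw [Filter.eventually_all]
      intro k
      by_cases hk : c.val + 1 ≤ k.val
      · have hbk : a < b k := by rw [← hc]; exact hbmono (Fin.lt_def.mpr (by omega))
        exact (eventually_lt_nhds hbk).mono fun x hx _ => hx
      · exact Filter.Eventually.of_forall fun x hk2 => absurd hk2 hk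
    have hvL : taggedW ρ b W0 a = FF ρ b W0 c.val a := by
      rw [tagged_eq ρ b W0 hbmono a, hia]
    have hvR : taggedW ρ b W0 a = FF ρ b W0 (c.val + 1) a := by
      rw [hvL, ← hc, bridge_val ρ b W0 hbpos c]
    have hevL : taggedW ρ b W0 =ᶠ[nhdsWithin a (Set.Iic a)] FF ρ b W0 c.val := by
      filter_upwards [nhdsWithin_le_nhds (h1.and h2), eventually_mem_nhdsWithin]
        with x hx hxle
      obtain ⟨hx0, hxk⟩ := hx
      have hcx : cnt b x = c.val := by
        apply cnt_eq b hbmono x c.val c.isLt.le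
        intro k
        constructor
        · intro hbkx
          by_contra hkc
          have hck : c ≤ k := Fin.le_def.mpr (by omega)
          have : b c ≤ b k := hbmono.monotone hck
          rw [hc] at this
          exact absurd hbkx (not_lt.mpr (le_trans (le_trans hxle this) (le_refl _)))
        · intro hk
          exact lt_of_lt_of_le (hxk k hk) (le_refl _)
      rw [tagged_eq ρ b W0 hbmono x, hcx]
    have hevR : taggedW ρ b W0 =ᶠ[nhdsWithin a (Set.Ici a)] FF ρ b W0 (c.val + 1) := by
      filter_upwards [nhdsWithin_le_nhds (h1.and h3), eventually_mem_nhdsWithin]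
        with x hx hxge
      obtain ⟨hx0, hxk⟩ := hx
      rcases eq_or_lt_of_le (Set.mem_Ici.mp hxge : a ≤ x) with heq | hlt
      · rw [← heq]; exact hvR
      · have hcx : cnt b x = c.val + 1 := by
          apply cnt_eq b hbmono x (c.val + 1) c.isLt
          intro k
          constructor
          · intro hbkx
            by_contra hkc
            exact absurd hbkx (not_lt.mpr (le_of_lt (hxk k (by omega))))
          · intro hk
            have hkc : k ≤ c := Fin.le_def.mpr (by omega)
            calc b k ≤ b c := hbmono.monotone hkc
              _ = a := hc
              _ < x := hlt
        rw [tagged_eq ρ b W0 hbmono x, hcx]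
    have hL : HasDerivWithinAt (taggedW ρ b W0) (gg ρ b W0 c.val a) (Set.Iic a) a :=
      hdL.hasDerivWithinAt.congr_of_eventuallyEq hevL hvL
    have hgg : gg ρ b W0 (c.val + 1) a = gg ρ b W0 c.val a := by
      rw [← hc]; exact bridge_deriv ρ b W0 hρ hρsum hbpos c
    have hR : HasDerivWithinAt (taggedW ρ b W0) (gg ρ b W0 c.val a) (Set.Ici a) a := by
      rw [← hgg]
      exact hdR.hasDerivWithinAt.congr_of_eventuallyEq hevR hvR
    have hU := hL.union hR
    rw [Set.Iic_union_Ici] at hU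
    rw [hia]
    exact hasDerivWithinAt_univ.mp hU
  · push_neg at hex
    have h2 : ∀ᶠ x in nhds a, ∀ k : Fin N, (b k < x ↔ b k < a) := by
      rw [Filter.eventually_all]
      intro k
      rcases lt_or_gt_of_ne (hex k) with hk | hk
      · exact (eventually_gt_nhds hk).mono fun x hx => iff_of_true hx hk
      · exact (eventually_lt_nhds hk).mono fun x hx =>
          iff_of_false (by linarith) (by linarith)
    have heq : taggedW ρ b W0 =ᶠ[nhds a] FF ρ b W0 (cnt b a) := by
      filter_upwards [h1.and h2] with x hx
      obtain ⟨hx0, hxk⟩ := hx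
      have hcx : cnt b x = cnt b a :=
        cnt_eq b hbmono x (cnt b a) hcle fun k =>
          (hxk k).trans (cnt_lt_iff b hbmono a k)
      rw [tagged_eq ρ b W0 hbmono x, hcx]
    exact (FF_hasDeriv ρ b W0 (cnt b a) ha.ne'
      (den_pos ρ b hρ hρsum hbpos (cnt b a) ha).ne').congr_of_eventuallyEq heq

include hρ hρsum hbpos hW0 hbmono in
lemma chain_le (hN : 0 < N) :
    ∀ d : ℕ, ∀ x y : ℝ, 0 < x → x ≤ y → cnt b y ≤ cnt b x + d →
      gg ρ b W0 (cnt b x) x ≤ gg ρ b W0 (cnt b y) y := by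
  intro d
  induction d with
  | zero =>
    intro x y hx hxy hle
    have heq : cnt b y = cnt b x := le_antisymm (by omega) (cnt_mono b hxy)
    rw [heq]
    exact gg_mono_le ρ b W0 hρ hρsum hbpos hW0 (cnt b x) (cnt_le b x) hN hx hxy
  | succ d ih =>
    intro x y hx hxy hle
    by_cases hcc : cnt b y ≤ cnt b x
    · have heq : cnt b y = cnt b x := le_antisymm hcc (cnt_mono b hxy)
      rw [heq]
      exact gg_mono_le ρ b W0 hρ hρsum hbpos hW0 (cnt b x) (cnt_le b x) hN hx hxy
    · have hlt : cnt b x < cnt b y := not_le.mp hcc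
      have hiN : cnt b x < N := lt_of_lt_of_le hlt (cnt_le b y)
      set c : Fin N := ⟨cnt b x, hiN⟩ with hcdef
      have hcval : c.val = cnt b x := rfl
      have hxm : x ≤ b c := by
        by_contra h
        push_neg at h
        have h2 := (cnt_lt_iff b hbmono x c).mp h
        rw [hcval] at h2
        exact lt_irrefl _ h2
      have hmy : b c < y := (cnt_lt_iff b hbmono y c).mpr (by rw [hcval]; exact hlt)
      have hm0 : 0 < b c := hbpos c
      set m' : ℝ := if h : cnt b x + 1 < N then
          min ((b c + y) / 2) (b ⟨cnt b x + 1, h⟩) else (b c + y) / 2 with hm'def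
      have hm'1 : b c < m' := by
        rw [hm'def]
        split
        · rename_i h
          apply lt_min (by linarith)
          exact hbmono (Fin.lt_def.mpr (show cnt b x < cnt b x + 1 from Nat.lt_succ_self _))
        · linarith
      have hm'2 : m' ≤ y := by
        rw [hm'def]
        split
        · exact le_trans (min_le_left _ _) (by linarith)
        · linarith
      have hcntm' : cnt b m' = cnt b x + 1 := by
        apply cnt_eq b hbmono m' (cnt b x + 1) hiN
        intro k
        constructor
        · intro hbk
          by_contra hkc
          push_neg at hkc
          have hk1N : cnt b x + 1 < N := by omega
          have hble : b ⟨cnt b x + 1, hk1N⟩ ≤ b k :=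
            hbmono.monotone (Fin.le_def.mpr (show cnt b x + 1 ≤ k.val from hkc))
          have hmle : m' ≤ b ⟨cnt b x + 1, hk1N⟩ := by
            rw [hm'def]
            split
            · exact min_le_right _ _
            · rename_i h2; omega
          linarith
        · intro hk
          have : b k ≤ b c :=
            hbmono.monotone (Fin.le_def.mpr (show k.val ≤ cnt b x from by omega))
          linarith
      have step1 : gg ρ b W0 (cnt b x) x ≤ gg ρ b W0 (cnt b x) (b c) :=
        gg_mono_le ρ b W0 hρ hρsum hbpos hW0 (cnt b x) (by omega) hN hx hxm
      have step2 : gg ρ b W0 (cnt b x) (b c) = gg ρ b W0 (cnt b x + 1) (b c) :=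
        (bridge_deriv ρ b W0 hρ hρsum hbpos c).symm
      have step3 : gg ρ b W0 (cnt b x + 1) (b c) ≤ gg ρ b W0 (cnt b x + 1) m' :=
        gg_mono_le ρ b W0 hρ hρsum hbpos hW0 (cnt b x + 1) (by omega) hN hm0 hm'1.le
      have step4 : gg ρ b W0 (cnt b m') m' ≤ gg ρ b W0 (cnt b y) y :=
        ih m' y (lt_trans hm0 hm'1) hm'2 (by omega)
      rw [hcntm'] at step4
      linarith

include hρ hρsum hbpos hW0 hbmono in
lemma chain_lt (hN : 0 < N) {x y : ℝ} (hx : 0 < x) (hxy : x < y) :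
    gg ρ b W0 (cnt b x) x < gg ρ b W0 (cnt b y) y := by
  by_cases hcc : cnt b y ≤ cnt b x
  · have heq : cnt b y = cnt b x := le_antisymm hcc (cnt_mono b hxy.le)
    rw [heq]
    exact gg_mono_lt ρ b W0 hρ hρsum hbpos hW0 (cnt b x) (cnt_le b x) hN hx hxy
  · have hlt : cnt b x < cnt b y := not_le.mp hcc
    have hiN : cnt b x < N := lt_of_lt_of_le hlt (cnt_le b y)
    set c : Fin N := ⟨cnt b x, hiN⟩ with hcdef
    have hcval : c.val = cnt b x := rfl
    have hxm : x ≤ b c := by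
      by_contra h
      push_neg at h
      have h2 := (cnt_lt_iff b hbmono x c).mp h
      rw [hcval] at h2
      exact lt_irrefl _ h2
    have hmy : b c < y := (cnt_lt_iff b hbmono y c).mpr (by rw [hcval]; exact hlt)
    have hm0 : 0 < b c := hbpos c
    set m' : ℝ := if h : cnt b x + 1 < N then
        min ((b c + y) / 2) (b ⟨cnt b x + 1, h⟩) else (b c + y) / 2 with hm'def
    have hm'1 : b c < m' := by
      rw [hm'def]
      split
      · rename_i h
        apply lt_min (by linarith)
        exact hbmono (Fin.lt_def.mpr (show cnt b x < cnt b x + 1 from Nat.lt_succ_self _))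
      · linarith
    have hm'2 : m' ≤ y := by
      rw [hm'def]
      split
      · exact le_trans (min_le_left _ _) (by linarith)
      · linarith
    have hcntm' : cnt b m' = cnt b x + 1 := by
      apply cnt_eq b hbmono m' (cnt b x + 1) hiN
      intro k
      constructor
      · intro hbk
        by_contra hkc
        push_neg at hkc
        have hk1N : cnt b x + 1 < N := by omega
        have hble : b ⟨cnt b x + 1, hk1N⟩ ≤ b k :=
          hbmono.monotone (Fin.le_def.mpr (show cnt b x + 1 ≤ k.val from hkc))
        have hmle : m' ≤ b ⟨cnt b x + 1, hk1N⟩ := by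
          rw [hm'def]
          split
          · exact min_le_right _ _
          · rename_i h2; omega
        linarith
      · intro hk
        have : b k ≤ b c :=
          hbmono.monotone (Fin.le_def.mpr (show k.val ≤ cnt b x from by omega))
        linarith
    have step1 : gg ρ b W0 (cnt b x) x ≤ gg ρ b W0 (cnt b x) (b c) :=
      gg_mono_le ρ b W0 hρ hρsum hbpos hW0 (cnt b x) (by omega) hN hx hxm
    have step2 : gg ρ b W0 (cnt b x) (b c) = gg ρ b W0 (cnt b x + 1) (b c) :=
      (bridge_deriv ρ b W0 hρ hρsum hbpos c).symm
    have step3 : gg ρ b W0 (cnt b x + 1) (b c) < gg ρ b W0 (cnt b x + 1) m' :=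
      gg_mono_lt ρ b W0 hρ hρsum hbpos hW0 (cnt b x + 1) (by omega) hN hm0 hm'1
    have step4 : gg ρ b W0 (cnt b m') m' ≤ gg ρ b W0 (cnt b y) y :=
      chain_le ρ b W0 hρ hρsum hbpos hW0 hbmono hN (cnt b y) m' y
        (lt_trans hm0 hm'1) hm'2 (by omega)
    rw [hcntm'] at step4
    linarith

end Pos
end APQ

/-- The tagged waiting-time function `a ↦ W(a;b)` is strictly decreasing and
strictly convex on `(0,∞)`. -/
theorem taggedW_strictAnti_strictConvex (N : ℕ) (hN : 1 ≤ N)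
    (ρ b : Fin N → ℝ) (W0 : ℝ)
    (hρ : ∀ k, 0 < ρ k) (hρsum : ∑ k, ρ k < 1) (hW0 : 0 < W0)
    (hbpos : ∀ k, 0 < b k) (hbmono : StrictMono b) :
    StrictAntiOn (taggedW ρ b W0) (Set.Ioi (0 : ℝ)) ∧
    StrictConvexOn ℝ (Set.Ioi (0 : ℝ)) (taggedW ρ b W0) := by
  have hN0 : 0 < N := hN
  have hD : ∀ x ∈ Set.Ioi (0:ℝ), HasDerivAt (taggedW ρ b W0)
      (APQ.gg ρ b W0 (APQ.cnt b x) x) x := fun x hx =>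
    APQ.tagged_hasDeriv ρ b W0 hρ hρsum hbpos hbmono hN0 hx
  have hcont : ContinuousOn (taggedW ρ b W0) (Set.Ioi (0:ℝ)) := fun x hx =>
    ((hD x hx).continuousAt).continuousWithinAt
  have hderiv : ∀ x ∈ Set.Ioi (0:ℝ),
      deriv (taggedW ρ b W0) x = APQ.gg ρ b W0 (APQ.cnt b x) x := fun x hx =>
    (hD x hx).deriv
  constructor
  · apply strictAntiOn_of_deriv_neg (convex_Ioi 0) hcont
    intro x hx
    rw [interior_Ioi] at hx
    rw [hderiv x hx]
    exact APQ.gg_neg ρ b W0 hρ hρsum hbpos hW0 (APQ.cnt b x) (APQ.cnt_le b x) hN0 hx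
  · apply StrictMonoOn.strictConvexOn_of_deriv (convex_Ioi 0) hcont
    rw [interior_Ioi]
    intro x hx y hy hxy
    rw [hderiv x hx, hderiv y hy]
    exact APQ.chain_lt ρ b W0 hρ hρsum hbpos hW0 hbmono hN0 hx hxy
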